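/- Let G be a finite connected simple graph with at least two vertices and let x ≠ y be vertices of G. Let η denote the number of common neighbours of x and y. Then the Ollivier–Ricci curvature satisfies the lower bound κ(x,y) ≥ 3·η/max(deg(x), deg(y)) − 2. -/

import Mathlib

/-!
STATEMENT 18: Let G be a finite connected simple graph with at least two
vertices and let x ≠ y be vertices of G. Let η denote the number of common
neighbours of x and y. Then the Ollivier–Ricci curvature satisfies the lower
bound κ(x,y) ≥ 3·η/max(deg(x), deg(y)) − 2.
-/
open Finset

variable {V : Type*}

/-- A coupling of two measures `μ` and `ν` on a finite vertex set. -/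
def IsCoupling [Fintype V] (μ ν : V → ℝ) (ξ : V → V → ℝ) : Prop :=
  (∀ u v, 0 ≤ ξ u v) ∧ (∀ u, ∑ v, ξ u v = μ u) ∧ (∀ v, ∑ u, ξ u v = ν v)

/-- The 1-Wasserstein distance between `μ` and `ν` with respect to the distance
function `d`: the infimum over couplings of the transport cost. -/
noncomputable def W1 [Fintype V] (d : V → V → ℝ) (μ ν : V → ℝ) : ℝ :=
  sInf {c | ∃ ξ : V → V → ℝ, IsCoupling μ ν ξ ∧ c = ∑ u, ∑ v, d u v * ξ u v}

/-- The neighbour measure of a vertex `x`: mass `1/deg(x)` on each neighbour. -/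
noncomputable def nbrMeasure [Fintype V] (G : SimpleGraph V) [DecidableRel G.Adj]
    (x : V) : V → ℝ :=
  fun z => if G.Adj x z then 1 / (G.degree x : ℝ) else 0

/-- The Ollivier–Ricci curvature of a pair of vertices, computed with the
shortest-path distance of `G`. -/
noncomputable def orc [Fintype V] (G : SimpleGraph V) [DecidableRel G.Adj]
    (x y : V) : ℝ :=
  1 - W1 (fun u v => (G.dist u v : ℝ)) (nbrMeasure G x) (nbrMeasure G y) / (G.dist x y)

/-- The number of common neighbours of two vertices. -/
def commonNbrs [Fintype V] [DecidableEq V] (G : SimpleGraph V)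
    [DecidableRel G.Adj] (x y : V) : ℕ :=
  (G.neighborFinset x ∩ G.neighborFinset y).card

lemma W1_le_of_coupling [Fintype V] {d : V → V → ℝ} (hd : ∀ u v, 0 ≤ d u v)
    {μ ν : V → ℝ} {ξ : V → V → ℝ} (h : IsCoupling μ ν ξ) :
    W1 d μ ν ≤ ∑ u, ∑ v, d u v * ξ u v := by
  apply csInf_le
  · refine ⟨0, ?_⟩
    rintro c ⟨ξ', hξ', rfl⟩
    exact Finset.sum_nonneg fun u _ => Finset.sum_nonneg fun v _ =>
      mul_nonneg (hd u v) (hξ'.1 u v)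
  · exact ⟨ξ, h, rfl⟩

lemma nbrMeasure_sum [Fintype V] (G : SimpleGraph V) [DecidableRel G.Adj]
    (x : V) (hx : 0 < G.degree x) : ∑ u, nbrMeasure G x u = 1 := by
  unfold nbrMeasure
  rw [← Finset.sum_filter]
  have h1 : Finset.univ.filter (fun u => G.Adj x u) = G.neighborFinset x := by
    ext u; simp [SimpleGraph.mem_neighborFinset]
  rw [h1, Finset.sum_const, SimpleGraph.card_neighborFinset_eq_degree]
  have : (G.degree x : ℝ) ≠ 0 := by positivity
  rw [nsmul_eq_mul]
  field_simp

theorem stmt18 [Fintype V] [DecidableEq V] (G : SimpleGraph V)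
    [DecidableRel G.Adj] (hconn : G.Connected) (hcard : 2 ≤ Fintype.card V)
    (x y : V) (hxy : x ≠ y) :
    3 * (commonNbrs G x y : ℝ) / (max (G.degree x) (G.degree y) : ℝ) - 2 ≤
      orc G x y := by
  -- degrees are positive
  have hdeg : ∀ v : V, 0 < G.degree v := by
    intro v
    rw [SimpleGraph.degree_pos_iff_exists_adj]
    obtain ⟨w, hw⟩ := Fintype.exists_ne_of_one_lt_card hcard v
    obtain ⟨p⟩ := hconn.preconnected v w
    cases p with
    | nil => exact absurd rfl hw.symm
    | cons h _ => exact ⟨_, h⟩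
  have hdx := hdeg x
  have hdy := hdeg y
  set μ : V → ℝ := nbrMeasure G x with hμdef
  set ν : V → ℝ := nbrMeasure G y with hνdef
  have hμ0 : ∀ u, 0 ≤ μ u := by
    intro u; unfold μ nbrMeasure; positivity
  have hν0 : ∀ u, 0 ≤ ν u := by
    intro u; unfold ν nbrMeasure; positivity
  have hμsum : ∑ u, μ u = 1 := nbrMeasure_sum G x hdx
  have hνsum : ∑ u, ν u = 1 := nbrMeasure_sum G y hdy
  set m : V → ℝ := fun u => min (μ u) (ν u) with hmdef
  have hm0 : ∀ u, 0 ≤ m u := fun u => le_min (hμ0 u) (hν0 u)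
  have hmleμ : ∀ u, m u ≤ μ u := fun u => min_le_left _ _
  have hmleν : ∀ u, m u ≤ ν u := fun u => min_le_right _ _
  set M : ℝ := ∑ u, m u with hMdef
  set R : ℝ := 1 - M with hRdef
  have hMle : M ≤ 1 := by
    rw [hMdef, ← hμsum]
    exact Finset.sum_le_sum fun u _ => min_le_left _ _
  have hR0 : 0 ≤ R := by rw [hRdef]; linarith
  have hsubμ : ∑ u, (μ u - m u) = R := by
    rw [Finset.sum_sub_distrib, hμsum]
  have hsubν : ∑ u, (ν u - m u) = R := by
    rw [Finset.sum_sub_distrib, hνsum]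
  -- common-neighbour mass
  set D : ℕ := max (G.degree x) (G.degree y) with hDdef
  have hD : 0 < D := lt_of_lt_of_le hdx (le_max_left _ _)
  have hDR : (0:ℝ) < D := by exact_mod_cast hD
  have hMη : (commonNbrs G x y : ℝ) / D ≤ M := by
    have hsub : G.neighborFinset x ∩ G.neighborFinset y ⊆ Finset.univ :=
      Finset.subset_univ _
    have hval : ∀ u ∈ G.neighborFinset x ∩ G.neighborFinset y, m u = 1 / (D:ℝ) := by
      intro u hu
      rw [Finset.mem_inter, SimpleGraph.mem_neighborFinset,
        SimpleGraph.mem_neighborFinset] at hu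
      have h1 : μ u = 1 / (G.degree x : ℝ) := if_pos hu.1
      have h2 : ν u = 1 / (G.degree y : ℝ) := if_pos hu.2
      rw [hmdef]
      simp only [h1, h2]
      rcases le_total (G.degree x) (G.degree y) with h | h
      · rw [min_eq_right, hDdef, max_eq_right h]
        apply one_div_le_one_div_of_le
        · exact_mod_cast hdx
        · exact_mod_cast h
      · rw [min_eq_left, hDdef, max_eq_left h]
        apply one_div_le_one_div_of_le
        · exact_mod_cast hdy
        · exact_mod_cast h
    calc (commonNbrs G x y : ℝ) / D
        = ∑ u ∈ G.neighborFinset x ∩ G.neighborFinset y, m u := by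
          rw [Finset.sum_congr rfl hval, Finset.sum_const, commonNbrs]
          push_cast
          ring
      _ ≤ M := by
          rw [hMdef]
          exact Finset.sum_le_sum_of_subset_of_nonneg hsub fun u _ _ => hm0 u
  -- the coupling
  set ξ : V → V → ℝ :=
    fun u v => (if u = v then m u else 0) + (μ u - m u) / R * (ν v - m v) with hξdef
  have hcoup : IsCoupling μ ν ξ := by
    refine ⟨?_, ?_, ?_⟩
    · intro u v
      apply add_nonneg
      · split <;> simp [hm0]
      · exact mul_nonneg (div_nonneg (by linarith [hmleμ u]) hR0)
          (by linarith [hmleν v])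
    · intro u
      rw [hξdef]
      simp only
      rw [Finset.sum_add_distrib, ← Finset.mul_sum, hsubν,
        Finset.sum_ite_eq Finset.univ u (fun _ => m u)]
      simp only [Finset.mem_univ, if_true]
      by_cases hRz : R = 0
      · have h0 : μ u - m u = 0 := by
          have h := (Finset.sum_eq_zero_iff_of_nonneg
            (s := Finset.univ) (f := fun w => μ w - m w)
            (fun w _ => sub_nonneg.mpr (hmleμ w))).mp (by rw [hsubμ, hRz])
          exact h u (Finset.mem_univ u)
        rw [hRz, h0]
        simp
        linarith [h0]
      · rw [div_mul_cancel₀ _ hRz]; ring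
    · intro v
      rw [hξdef]
      simp only
      rw [Finset.sum_add_distrib, ← Finset.sum_mul, ← Finset.sum_div, hsubμ,
        Finset.sum_ite_eq' Finset.univ v (fun _ => m _)]
      simp only [Finset.mem_univ, if_true]
      by_cases hRz : R = 0
      · have h0 : ν v - m v = 0 := by
          have h := (Finset.sum_eq_zero_iff_of_nonneg
            (s := Finset.univ) (f := fun w => ν w - m w)
            (fun w _ => sub_nonneg.mpr (hmleν w))).mp (by rw [hsubν, hRz])
          exact h v (Finset.mem_univ v)
        rw [hRz, h0]
        simp
        linarith [h0]
      · rw [div_mul_eq_mul_div, mul_comm, mul_div_assoc, div_self hRz]; ring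
  -- distance facts
  have hdnn : ∀ u v : V, (0:ℝ) ≤ (G.dist u v : ℝ) := fun u v => by positivity
  have ht1 : (1:ℝ) ≤ (G.dist x y : ℝ) := by
    exact_mod_cast hconn.pos_dist_of_ne hxy
  set t : ℝ := (G.dist x y : ℝ) with htdef
  have ht0 : 0 < t := lt_of_lt_of_le one_pos ht1
  -- cost bound
  have hcost : ∑ u, ∑ v, (G.dist u v : ℝ) * ξ u v ≤ (t + 2) * R := by
    have hdiag : ∀ u v : V, (G.dist u v : ℝ) * (if u = v then m u else 0) = 0 := by
      intro u v
      split
      · subst ‹u = v›; rw [SimpleGraph.dist_self]; simp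
      · simp
    have hterm : ∀ u v : V,
        (G.dist u v : ℝ) * ((μ u - m u) / R * (ν v - m v)) ≤
        (t + 2) * ((μ u - m u) / R * (ν v - m v)) := by
      intro u v
      have ha : 0 ≤ μ u - m u := by linarith [hmleμ u]
      have hb : 0 ≤ ν v - m v := by linarith [hmleν v]
      rcases eq_or_lt_of_le ha with ha' | ha'
      · rw [← ha']; simp
      rcases eq_or_lt_of_le hb with hb' | hb'
      · rw [← hb']; simp
      · have hadjx : G.Adj x u := by
          by_contra hc
          have : μ u = 0 := if_neg hc
          have := hm0 u; linarith
        have hadjy : G.Adj y v := by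
          by_contra hc
          have : ν v = 0 := if_neg hc
          have := hm0 v; linarith
        have hd1 : G.dist u x = 1 := SimpleGraph.dist_eq_one_iff_adj.mpr hadjx.symm
        have hd2 : G.dist y v = 1 := SimpleGraph.dist_eq_one_iff_adj.mpr hadjy
        have htri : G.dist u v ≤ G.dist u x + G.dist x y + G.dist y v := by
          calc G.dist u v ≤ G.dist u y + G.dist y v := hconn.dist_triangle
            _ ≤ (G.dist u x + G.dist x y) + G.dist y v := by
                have := hconn.dist_triangle (u := u) (v := x) (w := y)
                omega
        have hduv : (G.dist u v : ℝ) ≤ t + 2 := by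
          rw [hd1, hd2] at htri
          rw [htdef]
          push_cast
          have : (G.dist u v : ℝ) ≤ (1 : ℝ) + (G.dist x y : ℝ) + 1 := by
            exact_mod_cast htri
          linarith
        exact mul_le_mul_of_nonneg_right hduv
          (mul_nonneg (div_nonneg ha hR0) hb)
    calc ∑ u, ∑ v, (G.dist u v : ℝ) * ξ u v
        = ∑ u, ∑ v, (G.dist u v : ℝ) * ((μ u - m u) / R * (ν v - m v)) := by
          apply Finset.sum_congr rfl; intro u _
          apply Finset.sum_congr rfl; intro v _
          rw [hξdef]; simp only
          rw [mul_add, hdiag u v, zero_add]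
      _ ≤ ∑ u, ∑ v, (t + 2) * ((μ u - m u) / R * (ν v - m v)) :=
          Finset.sum_le_sum fun u _ => Finset.sum_le_sum fun v _ => hterm u v
      _ = ∑ u, ((t + 2) * ((μ u - m u) / R) * R) := by
          refine Finset.sum_congr rfl fun u _ => ?_
          simp only [← mul_assoc]
          rw [← Finset.mul_sum, hsubν]
      _ = (t + 2) * ((R / R) * R) := by
          rw [← Finset.sum_mul, ← Finset.mul_sum, ← Finset.sum_div, hsubμ]
          ring
      _ ≤ (t + 2) * R := by
          by_cases hRz : R = 0
          · rw [hRz]; simp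
          · rw [div_self hRz, one_mul]
  -- put it together
  have hW : W1 (fun u v => (G.dist u v : ℝ)) μ ν ≤ (t + 2) * R :=
    le_trans (W1_le_of_coupling hdnn hcoup) hcost
  have key : W1 (fun u v => (G.dist u v : ℝ)) μ ν / t ≤ 3 * R := by
    rw [div_le_iff₀ ht0]
    nlinarith [hW, hR0, ht1]
  have hReq : R = 1 - M := rfl
  have h3 : 3 * R ≤ 3 - 3 * ((commonNbrs G x y : ℝ) / D) := by
    rw [hReq]; linarith [hMη]
  have hDcast : ((D : ℕ) : ℝ) = max ((G.degree x : ℕ) : ℝ) ((G.degree y : ℕ) : ℝ) := by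
    rw [hDdef]; exact Nat.cast_max _ _
  have hgoal : 3 * (commonNbrs G x y : ℝ) / (D : ℝ) - 2 ≤ orc G x y := by
    simp only [orc, ← hμdef, ← hνdef, ← htdef]
    have : 3 * (commonNbrs G x y : ℝ) / (D : ℝ)
        = 3 * ((commonNbrs G x y : ℝ) / (D : ℝ)) := by ring
    rw [this]
    linarith [key, h3]
  rw [hDcast] at hgoal
  exact hgoal
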